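/- Let A be a symmetric positive definite real matrix indexed by a finite type, let u be an index with standard basis vector e_u, and let w > 0 be a real number. Then trace(A^{-1}) - trace((A + w·e_u e_uᵀ)^{-1}) = w·‖A^{-1} e_u‖² / (1 + w·e_uᵀ A^{-1} e_u), and this quantity is strictly positive. -/

import Mathlib

open Matrix

lemma mul_vecMulVec' {n : Type*} [Fintype n] (M : Matrix n n ℝ) (v w : n → ℝ) :
    M * vecMulVec v w = vecMulVec (M *ᵥ v) w := by
  ext i j
  simp [Matrix.mul_apply, vecMulVec_apply, mulVec, dotProduct, Finset.sum_mul, mul_assoc]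

lemma vecMulVec_mul' {n : Type*} [Fintype n] (M : Matrix n n ℝ) (v w : n → ℝ) :
    vecMulVec v w * M = vecMulVec v (w ᵥ* M) := by
  ext i j
  simp [Matrix.mul_apply, vecMulVec_apply, vecMul, dotProduct, Finset.mul_sum, mul_assoc]

lemma vecMulVec_mul_vecMulVec' {n : Type*} [Fintype n] (a b c d : n → ℝ) :
    vecMulVec a b * vecMulVec c d = (b ⬝ᵥ c) • vecMulVec a d := by
  ext i j
  simp [Matrix.mul_apply, vecMulVec_apply, dotProduct, Finset.sum_mul, Finset.mul_sum]
  exact Finset.sum_congr rfl fun x _ => by ring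

lemma trace_vecMulVec' {n : Type*} [Fintype n] (v w : n → ℝ) :
    (vecMulVec v w).trace = v ⬝ᵥ w := by
  simp [Matrix.trace, Matrix.diag, vecMulVec_apply, dotProduct]

/-- Sherman–Morrison trace identity: for a symmetric positive definite matrix `A`, an
index `u` and a weight `w > 0`,
`trace(A⁻¹) - trace((A + w·e_u e_uᵀ)⁻¹) = w·‖A⁻¹ e_u‖² / (1 + w·e_uᵀ A⁻¹ e_u)`,
and this quantity is strictly positive. -/
theorem trace_inv_rank_one_update {n : Type*} [Fintype n] [DecidableEq n]
    (A : Matrix n n ℝ) (hA : A.PosDef) (u : n) (w : ℝ) (hw : 0 < w) :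
    A⁻¹.trace - ((A + Matrix.single u u w)⁻¹).trace =
        w * (∑ i, (A⁻¹ *ᵥ Pi.single u 1) i ^ 2) /
          (1 + w * (Pi.single u 1 ⬝ᵥ (A⁻¹ *ᵥ Pi.single u 1))) ∧
      0 < A⁻¹.trace - ((A + Matrix.single u u w)⁻¹).trace := by
  set e : n → ℝ := Pi.single u 1 with he
  set v : n → ℝ := A⁻¹ *ᵥ e with hv
  set c : ℝ := e ⬝ᵥ v with hc
  have he0 : e ≠ 0 := by
    intro h
    have := congrFun h u
    simp [he] at this
  have hAinv : A⁻¹.PosDef := hA.inv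
  have hcpos : 0 < c := by
    have := hAinv.dotProduct_mulVec_pos he0
    simpa [hc, hv] using this
  have hwc : 0 < 1 + w * c := by nlinarith
  set k : ℝ := w / (1 + w * c) with hk
  have hAA : A * A⁻¹ = 1 := mul_nonsing_inv A (isUnit_iff_ne_zero.mpr hA.det_pos.ne')
  have hsymm : A⁻¹ᵀ = A⁻¹ := by
    have := hA.1.inv
    simpa [Matrix.IsHermitian] using this
  have hstd : Matrix.single u u w = w • vecMulVec e e := by
    rw [he, ← single_eq_single_vecMulVec_single, smul_single, smul_eq_mul,
      mul_one]
  have hAv : A *ᵥ v = e := by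
    rw [hv, mulVec_mulVec, hAA, one_mulVec]
  have heA : e ᵥ* A⁻¹ = v := by
    rw [← hsymm, vecMul_transpose]
  have hBM : (A + Matrix.single u u w) * (A⁻¹ - k • vecMulVec v v) = 1 := by
    rw [hstd, add_mul, mul_sub, mul_sub, Matrix.mul_smul, Matrix.mul_smul, Matrix.smul_mul,
      Matrix.smul_mul, hAA, mul_vecMulVec', hAv, vecMulVec_mul', heA,
      vecMulVec_mul_vecMulVec', ← hc, smul_smul, smul_smul]
    have : (1 : Matrix n n ℝ) - k • vecMulVec e v + (w • vecMulVec e v - (k * w * c) • vecMulVec e v)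
        = 1 + (w - k - k * w * c) • vecMulVec e v := by
      rw [sub_smul, sub_smul]
      abel
    rw [this]
    have hz : w - k - k * w * c = 0 := by
      rw [hk]
      field_simp
      ring
    rw [hz, zero_smul, add_zero]
  have hinv : (A + Matrix.single u u w)⁻¹ = A⁻¹ - k • vecMulVec v v :=
    inv_eq_right_inv hBM
  have htr : A⁻¹.trace - ((A + Matrix.single u u w)⁻¹).trace = k * (v ⬝ᵥ v) := by
    rw [hinv, Matrix.trace_sub, Matrix.trace_smul, trace_vecMulVec']
    simp
  have hsum : v ⬝ᵥ v = ∑ i, v i ^ 2 := by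
    simp [dotProduct, sq]
  have hSpos : 0 < ∑ i, v i ^ 2 := by
    have hvne : v ≠ 0 := by
      intro h
      rw [hc, h] at hcpos
      simp at hcpos
    obtain ⟨i, hi⟩ := Function.ne_iff.mp hvne
    have hi' : (0 : ℝ) < v i ^ 2 := (sq_nonneg _).lt_of_ne (Ne.symm (pow_ne_zero 2 hi))
    exact Finset.sum_pos' (fun j _ => sq_nonneg _) ⟨i, Finset.mem_univ i, hi'⟩
  constructor
  · rw [htr, hsum, hk, div_mul_eq_mul_div]
  · rw [htr, hsum]
    exact mul_pos (div_pos hw hwc) hSpos
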